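/- Let β > 0 and let p(t) be a strictly positive solution of the L = 2 mean-field system with λ = 0, and let p* be the trinomial equilibrium. Then the relative entropy H(t) = Σ_{(b,r)} p_{b,r}(t) ln(p_{b,r}(t)/p*_{b,r}) satisfies (1/β) H'(t) = -2(p_{0,0}p_{2,0} - p_{1,0}²/4) ln(4p_{0,0}p_{2,0}/p_{1,0}²) - 2(p_{0,0}p_{0,2} - p_{0,1}²/4) ln(4p_{0,0}p_{0,2}/p_{0,1}²) - 2(p_{0,0}p_{1,1} - p_{0,1}p_{1,0}/2) ln(2p_{0,0}p_{1,1}/(p_{0,1}p_{1,0})) - (p_{0,1}p_{2,0} - p_{1,0}p_{1,1}/2) ln(2p_{0,1}p_{2,0}/(p_{1,0}p_{1,1})) - (p_{1,0}p_{0,2} - p_{0,1}p_{1,1}/2) ln(2p_{1,0}p_{0,2}/(p_{0,1}p_{1,1})), and in particular H'(t) ≤ 0 for all t. -/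

import Mathlib

lemma aux_plog {p : ℝ → ℝ} {d q t : ℝ} (hp : HasDerivAt p d t) (hpt : p t ≠ 0) (hq : q ≠ 0) :
    HasDerivAt (fun s => p s * Real.log (p s / q)) (d * (Real.log (p t / q) + 1)) t := by
  have hdiv : HasDerivAt (fun x : ℝ => x / q) (1 / q) (p t) := (hasDerivAt_id (p t)).div_const q
  have hlog : HasDerivAt (fun x : ℝ => Real.log (x / q)) (1 / p t) (p t) := by
    have h := (Real.hasDerivAt_log (div_ne_zero hpt hq)).comp (p t) hdiv
    exact h.congr_deriv (by field_simp)
  have h1 : HasDerivAt (fun x : ℝ => x * Real.log (x / q)) (Real.log (p t / q) + 1) (p t) := by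
    have h := (hasDerivAt_id (p t)).mul hlog
    exact h.congr_deriv (by simp only [id]; field_simp)
  have h2 := h1.comp t hp
  exact h2.congr_deriv (by ring)

lemma aux_ineq {X Y : ℝ} (hX : 0 < X) (hY : 0 < Y) : 0 ≤ (X - Y) * Real.log (X / Y) := by
  rcases le_total Y X with h | h
  · exact mul_nonneg (by linarith) (Real.log_nonneg ((one_le_div hY).2 h))
  · exact mul_nonneg_of_nonpos_of_nonpos (by linarith)
      (Real.log_nonpos (by positivity) ((div_le_one hY).2 h))



set_option maxHeartbeats 1000000 in
/-- Entropy dissipation identity for the L = 2 mean-field system with λ = 0: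
the relative entropy with respect to the trinomial equilibrium decreases,
and (1/β) H'(t) equals the sum of the five nonpositive reaction terms. -/
theorem stmt_4
    (β ρm ρp : ℝ) (hβ : 0 < β)
    (hρm : ρm ∈ Set.Ioo (0:ℝ) 1) (hρp : ρp ∈ Set.Ioo (0:ℝ) 1) (hsum : ρm + ρp < 1)
    (p00 p10 p01 p20 p02 p11 : ℝ → ℝ)
    (q00 q10 q01 q20 q02 q11 : ℝ)
    (e00 : q00 = (1 - ρm - ρp)^2) (e10 : q10 = 2*ρm*(1 - ρm - ρp))
    (e01 : q01 = 2*ρp*(1 - ρm - ρp)) (e20 : q20 = ρm^2)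
    (e02 : q02 = ρp^2) (e11 : q11 = 2*ρm*ρp)
    (hpos : ∀ t ≥ (0:ℝ), 0 < p00 t ∧ 0 < p10 t ∧ 0 < p01 t ∧ 0 < p20 t ∧ 0 < p02 t ∧ 0 < p11 t)
    (hconsB : ∀ t ≥ (0:ℝ), (p11 t + p10 t + 2*p20 t)/2 = ρm)
    (hconsR : ∀ t ≥ (0:ℝ), (p11 t + p01 t + 2*p02 t)/2 = ρp)
    (hconsS : ∀ t ≥ (0:ℝ), p00 t + p10 t + p01 t + p20 t + p02 t + p11 t = 1)
    (h00 : ∀ t ≥ (0:ℝ), HasDerivAt p00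
      (-2*β*(p00 t)*(p02 t + p20 t + p11 t)
        + (β/2)*((p10 t)^2 + (p01 t)^2) + β*(p10 t)*(p01 t)) t)
    (h10 : ∀ t ≥ (0:ℝ), HasDerivAt p10
      (-β*(p10 t)*(1 - p00 t - p20 t)
        + β*(4*(p00 t)*(p20 t) + (p01 t)*(p20 t) + 2*(p00 t)*(p11 t)
          + ((p10 t + p01 t)/2)*(p11 t))) t)
    (h01 : ∀ t ≥ (0:ℝ), HasDerivAt p01
      (-β*(p01 t)*(1 - p00 t - p02 t)
        + β*(4*(p00 t)*(p02 t) + (p02 t)*(p10 t) + 2*(p00 t)*(p11 t)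
          + ((p10 t + p01 t)/2)*(p11 t))) t)
    (h20 : ∀ t ≥ (0:ℝ), HasDerivAt p20
      (-β*(p20 t)*(2*p00 t + p01 t) + (β/2)*(p10 t)^2 + (β/2)*(p10 t)*(p11 t)) t)
    (h02 : ∀ t ≥ (0:ℝ), HasDerivAt p02
      (-β*(p02 t)*(2*p00 t + p10 t) + (β/2)*(p01 t)^2 + (β/2)*(p01 t)*(p11 t)) t)
    (h11 : ∀ t ≥ (0:ℝ), HasDerivAt p11
      (-β*(p11 t)*(2*p00 t + p01 t + p10 t)
        + β*((p10 t)*(p01 t) + (p20 t)*(p01 t) + (p10 t)*(p02 t)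
          + ((p10 t + p01 t)/2)*(p11 t))) t)
    (H : ℝ → ℝ)
    (hH : ∀ t, H t = p00 t * Real.log (p00 t / q00) + p10 t * Real.log (p10 t / q10)
      + p01 t * Real.log (p01 t / q01) + p20 t * Real.log (p20 t / q20)
      + p02 t * Real.log (p02 t / q02) + p11 t * Real.log (p11 t / q11)) :
    ∀ t ≥ (0:ℝ),
      HasDerivAt H
        (β * (-2*((p00 t)*(p20 t) - (p10 t)^2/4) * Real.log (4*(p00 t)*(p20 t)/(p10 t)^2)
          - 2*((p00 t)*(p02 t) - (p01 t)^2/4) * Real.log (4*(p00 t)*(p02 t)/(p01 t)^2)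
          - 2*((p00 t)*(p11 t) - (p01 t)*(p10 t)/2)
              * Real.log (2*(p00 t)*(p11 t)/((p01 t)*(p10 t)))
          - ((p01 t)*(p20 t) - (p10 t)*(p11 t)/2)
              * Real.log (2*(p01 t)*(p20 t)/((p10 t)*(p11 t)))
          - ((p10 t)*(p02 t) - (p01 t)*(p11 t)/2)
              * Real.log (2*(p10 t)*(p02 t)/((p01 t)*(p11 t))))) t ∧
      β * (-2*((p00 t)*(p20 t) - (p10 t)^2/4) * Real.log (4*(p00 t)*(p20 t)/(p10 t)^2)
          - 2*((p00 t)*(p02 t) - (p01 t)^2/4) * Real.log (4*(p00 t)*(p02 t)/(p01 t)^2)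
          - 2*((p00 t)*(p11 t) - (p01 t)*(p10 t)/2)
              * Real.log (2*(p00 t)*(p11 t)/((p01 t)*(p10 t)))
          - ((p01 t)*(p20 t) - (p10 t)*(p11 t)/2)
              * Real.log (2*(p01 t)*(p20 t)/((p10 t)*(p11 t)))
          - ((p10 t)*(p02 t) - (p01 t)*(p11 t)/2)
              * Real.log (2*(p10 t)*(p02 t)/((p01 t)*(p11 t)))) ≤ 0 := by
  
  intro t ht
  obtain ⟨ha, hb, hc, hd, he, hf⟩ := hpos t ht
  have hrm : 0 < ρm := hρm.1
  have hrp : 0 < ρp := hρp.1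
  have hr0 : 0 < 1 - ρm - ρp := by linarith
  have hq00 : q00 ≠ 0 := by rw [e00]; positivity
  have hq10 : q10 ≠ 0 := by rw [e10]; positivity
  have hq01 : q01 ≠ 0 := by rw [e01]; positivity
  have hq20 : q20 ≠ 0 := by rw [e20]; positivity
  have hq02 : q02 ≠ 0 := by rw [e02]; positivity
  have hq11 : q11 ≠ 0 := by rw [e11]; positivity
  have hS := hconsS t ht
  have l4 : Real.log 4 = 2 * Real.log 2 := by
    rw [show (4:ℝ) = 2^2 by norm_num, Real.log_pow]; push_cast; ring
  have L1 : Real.log (p00 t / q00) = Real.log (p00 t) - 2*Real.log (1-ρm-ρp) := by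
    rw [e00, Real.log_div ha.ne' (by positivity), Real.log_pow]; push_cast; ring
  have L2 : Real.log (p10 t / q10)
      = Real.log (p10 t) - (Real.log 2 + Real.log ρm + Real.log (1-ρm-ρp)) := by
    rw [e10, Real.log_div hb.ne' (by positivity), Real.log_mul (by positivity) hr0.ne',
      Real.log_mul (by norm_num : (2:ℝ) ≠ 0) hrm.ne']
  have L3 : Real.log (p01 t / q01)
      = Real.log (p01 t) - (Real.log 2 + Real.log ρp + Real.log (1-ρm-ρp)) := by
    rw [e01, Real.log_div hc.ne' (by positivity), Real.log_mul (by positivity) hr0.ne',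
      Real.log_mul (by norm_num : (2:ℝ) ≠ 0) hrp.ne']
  have L4 : Real.log (p20 t / q20) = Real.log (p20 t) - 2*Real.log ρm := by
    rw [e20, Real.log_div hd.ne' (by positivity), Real.log_pow]; push_cast; ring
  have L5 : Real.log (p02 t / q02) = Real.log (p02 t) - 2*Real.log ρp := by
    rw [e02, Real.log_div he.ne' (by positivity), Real.log_pow]; push_cast; ring
  have L6 : Real.log (p11 t / q11)
      = Real.log (p11 t) - (Real.log 2 + Real.log ρm + Real.log ρp) := by
    rw [e11, Real.log_div hf.ne' (by positivity), Real.log_mul (by positivity) hrp.ne',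
      Real.log_mul (by norm_num : (2:ℝ) ≠ 0) hrm.ne']
  have L7 : Real.log (4*(p00 t)*(p20 t)/(p10 t)^2)
      = 2*Real.log 2 + Real.log (p00 t) + Real.log (p20 t) - 2*Real.log (p10 t) := by
    rw [Real.log_div (by positivity) (by positivity), Real.log_mul (by positivity) hd.ne',
      Real.log_mul (by norm_num : (4:ℝ) ≠ 0) ha.ne', Real.log_pow, l4]
    push_cast; ring
  have L8 : Real.log (4*(p00 t)*(p02 t)/(p01 t)^2)
      = 2*Real.log 2 + Real.log (p00 t) + Real.log (p02 t) - 2*Real.log (p01 t) := by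
    rw [Real.log_div (by positivity) (by positivity), Real.log_mul (by positivity) he.ne',
      Real.log_mul (by norm_num : (4:ℝ) ≠ 0) ha.ne', Real.log_pow, l4]
    push_cast; ring
  have L9 : Real.log (2*(p00 t)*(p11 t)/((p01 t)*(p10 t)))
      = Real.log 2 + Real.log (p00 t) + Real.log (p11 t)
        - (Real.log (p01 t) + Real.log (p10 t)) := by
    rw [Real.log_div (by positivity) (by positivity), Real.log_mul (by positivity) hf.ne',
      Real.log_mul (by norm_num : (2:ℝ) ≠ 0) ha.ne', Real.log_mul hc.ne' hb.ne']
  have L10 : Real.log (2*(p01 t)*(p20 t)/((p10 t)*(p11 t)))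
      = Real.log 2 + Real.log (p01 t) + Real.log (p20 t)
        - (Real.log (p10 t) + Real.log (p11 t)) := by
    rw [Real.log_div (by positivity) (by positivity), Real.log_mul (by positivity) hd.ne',
      Real.log_mul (by norm_num : (2:ℝ) ≠ 0) hc.ne', Real.log_mul hb.ne' hf.ne']
  have L11 : Real.log (2*(p10 t)*(p02 t)/((p01 t)*(p11 t)))
      = Real.log 2 + Real.log (p10 t) + Real.log (p02 t)
        - (Real.log (p01 t) + Real.log (p11 t)) := by
    rw [Real.log_div (by positivity) (by positivity), Real.log_mul (by positivity) he.ne',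
      Real.log_mul (by norm_num : (2:ℝ) ≠ 0) hb.ne', Real.log_mul hc.ne' hf.ne']
  constructor
  · have D1 := aux_plog (h00 t ht) ha.ne' hq00
    have D2 := aux_plog (h10 t ht) hb.ne' hq10
    have D3 := aux_plog (h01 t ht) hc.ne' hq01
    have D4 := aux_plog (h20 t ht) hd.ne' hq20
    have D5 := aux_plog (h02 t ht) he.ne' hq02
    have D6 := aux_plog (h11 t ht) hf.ne' hq11
    have HD := ((((D1.add D2).add D3).add D4).add D5).add D6
    have hHf : H = fun s => p00 s * Real.log (p00 s / q00) + p10 s * Real.log (p10 s / q10)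
        + p01 s * Real.log (p01 s / q01) + p20 s * Real.log (p20 s / q20)
        + p02 s * Real.log (p02 s / q02) + p11 s * Real.log (p11 s / q11) := funext hH
    rw [hHf]
    refine HD.congr_deriv (Eq.symm ?_)
    rw [L1, L2, L3, L4, L5, L6, L7, L8, L9, L10, L11]
    linear_combination (-(β*(p10 t)*(Real.log (p10 t)
        - (Real.log 2 + Real.log ρm + Real.log (1-ρm-ρp)) + 1))
      - β*(p01 t)*(Real.log (p01 t)
        - (Real.log 2 + Real.log ρp + Real.log (1-ρm-ρp)) + 1)) * hS
  · have T1 : 0 ≤ ((p00 t)*(p20 t) - (p10 t)^2/4) * Real.log (4*(p00 t)*(p20 t)/(p10 t)^2) := by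
      rw [show 4*(p00 t)*(p20 t)/(p10 t)^2 = ((p00 t)*(p20 t))/((p10 t)^2/4) by
        field_simp]
      exact aux_ineq (by positivity) (by positivity)
    have T2 : 0 ≤ ((p00 t)*(p02 t) - (p01 t)^2/4) * Real.log (4*(p00 t)*(p02 t)/(p01 t)^2) := by
      rw [show 4*(p00 t)*(p02 t)/(p01 t)^2 = ((p00 t)*(p02 t))/((p01 t)^2/4) by
        field_simp]
      exact aux_ineq (by positivity) (by positivity)
    have T3 : 0 ≤ ((p00 t)*(p11 t) - (p01 t)*(p10 t)/2)
        * Real.log (2*(p00 t)*(p11 t)/((p01 t)*(p10 t))) := by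
      rw [show 2*(p00 t)*(p11 t)/((p01 t)*(p10 t))
          = ((p00 t)*(p11 t))/((p01 t)*(p10 t)/2) by field_simp]
      exact aux_ineq (by positivity) (by positivity)
    have T4 : 0 ≤ ((p01 t)*(p20 t) - (p10 t)*(p11 t)/2)
        * Real.log (2*(p01 t)*(p20 t)/((p10 t)*(p11 t))) := by
      rw [show 2*(p01 t)*(p20 t)/((p10 t)*(p11 t))
          = ((p01 t)*(p20 t))/((p10 t)*(p11 t)/2) by field_simp]
      exact aux_ineq (by positivity) (by positivity)
    have T5 : 0 ≤ ((p10 t)*(p02 t) - (p01 t)*(p11 t)/2)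
        * Real.log (2*(p10 t)*(p02 t)/((p01 t)*(p11 t))) := by
      rw [show 2*(p10 t)*(p02 t)/((p01 t)*(p11 t))
          = ((p10 t)*(p02 t))/((p01 t)*(p11 t)/2) by field_simp]
      exact aux_ineq (by positivity) (by positivity)
    have hterm : (-2*((p00 t)*(p20 t) - (p10 t)^2/4) * Real.log (4*(p00 t)*(p20 t)/(p10 t)^2)
          - 2*((p00 t)*(p02 t) - (p01 t)^2/4) * Real.log (4*(p00 t)*(p02 t)/(p01 t)^2)
          - 2*((p00 t)*(p11 t) - (p01 t)*(p10 t)/2)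
              * Real.log (2*(p00 t)*(p11 t)/((p01 t)*(p10 t)))
          - ((p01 t)*(p20 t) - (p10 t)*(p11 t)/2)
              * Real.log (2*(p01 t)*(p20 t)/((p10 t)*(p11 t)))
          - ((p10 t)*(p02 t) - (p01 t)*(p11 t)/2)
              * Real.log (2*(p10 t)*(p02 t)/((p01 t)*(p11 t)))) ≤ 0 := by
      linarith [T1, T2, T3, T4, T5]
    have hfin := mul_le_mul_of_nonneg_left hterm hβ.le
    simpa using hfin
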